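/- Let V : ℂ^d → ℂ^D be an isometry with d ≥ 2, and fix the orthonormal encoded basis |i⟩ := V ẽ_i, 0 ≤ i < d, where (ẽ_i) is the standard basis of ℂ^d. Let ℰ(ρ) = Σ_a E_a ρ E_aᴴ be a channel given by a Kraus family (E_a), and suppose there exists a recovery channel R (given by some Kraus family) such that ‖R(ℰ(ρ)) − ρ‖₁ ≤ ε̃ for every density operator ρ supported on the range of V. For a fixed index i, set ρ_{i,⊥} = (d−1)^{−1} Σ_{j≠i} |j⟩⟨j|, let M_i = ℰ(|i⟩⟨i| − ρ_{i,⊥}) (a Hermitian traceless matrix), and let P_i be the orthogonal projection onto the direct sum of eigenspaces of M_i with positive eigenvalue. Then for every Kraus operator E_a, ‖E_a|i⟩ − P_i E_a|i⟩‖² ≤ ε̃, where ‖·‖ is the Euclidean norm on ℂ^D. -/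

import Mathlib

open Matrix
open scoped ComplexOrder

/-- The trace norm `‖A‖₁ = Tr √(AᴴA)` of a complex square matrix. -/
noncomputable def traceNorm {n : Type*} [Fintype n] [DecidableEq n] (A : Matrix n n ℂ) : ℝ :=
  ((Matrix.posSemidef_conjTranspose_mul_self A).1.eigenvectorUnitary.1 *
    Matrix.diagonal ((fun x : ℝ => (x : ℂ)) ∘ (Real.sqrt ·) ∘ (Matrix.posSemidef_conjTranspose_mul_self A).1.eigenvalues) *
    (star (Matrix.posSemidef_conjTranspose_mul_self A).1.eigenvectorUnitary : Matrix n n ℂ)).trace.re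

/-- A density operator: positive semidefinite with unit trace. -/
def IsDensity {n : Type*} [Fintype n] (ρ : Matrix n n ℂ) : Prop :=
  ρ.PosSemidef ∧ ρ.trace = 1

/-- Apply the channel with Kraus family `K`: `ρ ↦ Σ_a K_a ρ K_aᴴ`. -/
noncomputable def applyKraus {ι n n' : Type*} [Fintype ι] [Fintype n] [Fintype n']
    (K : ι → Matrix n' n ℂ) (ρ : Matrix n n ℂ) : Matrix n' n' ℂ :=
  ∑ a, K a * ρ * (K a)ᴴ

/-- The Euclidean norm of a complex vector. -/
noncomputable def evecNorm {n : Type*} [Fintype n] (v : n → ℂ) : ℝ :=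
  Real.sqrt (∑ i, Complex.normSq (v i))

/-- The orthogonal projection onto the direct sum of the eigenspaces of a Hermitian
matrix `M` with positive eigenvalue. -/
noncomputable def posProj {n : Type*} [Fintype n] [DecidableEq n] {M : Matrix n n ℂ}
    (hM : M.IsHermitian) : Matrix n n ℂ :=
  (hM.eigenvectorUnitary : Matrix n n ℂ) *
    Matrix.diagonal (fun i => if 0 < hM.eigenvalues i then (1 : ℂ) else 0) *
    (hM.eigenvectorUnitary : Matrix n n ℂ)ᴴ

/-- The encoded basis vector `|i⟩ = V ẽ_i`. -/
noncomputable def ket {d D : ℕ} (V : Matrix (Fin D) (Fin d) ℂ) (i : Fin d) : Fin D → ℂ :=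
  V *ᵥ Pi.single i 1

/-- The rank-one projector `|i⟩⟨i|` onto the encoded basis vector. -/
noncomputable def ketbra {d D : ℕ} (V : Matrix (Fin D) (Fin d) ℂ) (i : Fin d) :
    Matrix (Fin D) (Fin D) ℂ :=
  Matrix.vecMulVec (ket V i) (star (ket V i))

/-- The state `ρ_{i,⊥} = (d−1)⁻¹ Σ_{j ≠ i} |j⟩⟨j|`. -/
noncomputable def rhoPerp {d D : ℕ} (V : Matrix (Fin D) (Fin d) ℂ) (i : Fin d) :
    Matrix (Fin D) (Fin D) ℂ :=
  ((d : ℂ) - 1)⁻¹ • ∑ j ∈ Finset.univ.erase i, ketbra V j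

namespace Ghost

set_option linter.unusedSectionVars false

variable {n : Type*} [Fintype n] [DecidableEq n]

/-! ### Functional calculus scaffolding -/

/-- Functional calculus: `U * diagonal (f ∘ λ) * Uᴴ`. -/
noncomputable def fapp {M : Matrix n n ℂ} (hM : M.IsHermitian) (f : ℝ → ℝ) : Matrix n n ℂ :=
  (hM.eigenvectorUnitary : Matrix n n ℂ) *
    Matrix.diagonal (fun i => (f (hM.eigenvalues i) : ℂ)) *
    (hM.eigenvectorUnitary : Matrix n n ℂ)ᴴ

variable {M : Matrix n n ℂ} (hM : M.IsHermitian)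

lemma U_mul_Uh : (hM.eigenvectorUnitary : Matrix n n ℂ) *
    (hM.eigenvectorUnitary : Matrix n n ℂ)ᴴ = 1 := by
  rw [← Matrix.star_eq_conjTranspose]
  exact (Matrix.mem_unitaryGroup_iff).mp (hM.eigenvectorUnitary).2

lemma Uh_mul_U : (hM.eigenvectorUnitary : Matrix n n ℂ)ᴴ *
    (hM.eigenvectorUnitary : Matrix n n ℂ) = 1 := by
  rw [← Matrix.star_eq_conjTranspose]
  exact (Matrix.mem_unitaryGroup_iff').mp (hM.eigenvectorUnitary).2

lemma fapp_mul (f g : ℝ → ℝ) :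
    fapp hM f * fapp hM g = fapp hM (fun x => f x * g x) := by
  unfold fapp
  rw [mul_assoc, mul_assoc, ← mul_assoc ((hM.eigenvectorUnitary : Matrix n n ℂ)ᴴ),
    ← mul_assoc ((hM.eigenvectorUnitary : Matrix n n ℂ)ᴴ), Uh_mul_U, one_mul,
    ← mul_assoc (Matrix.diagonal _), Matrix.diagonal_mul_diagonal, ← mul_assoc]
  push_cast
  ring_nf

lemma fapp_id : fapp hM (fun x => x) = M := by
  conv_rhs => rw [hM.spectral_theorem]
  rfl

lemma trace_fapp (f : ℝ → ℝ) :
    (fapp hM f).trace = ∑ i, (f (hM.eigenvalues i) : ℂ) := by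
  unfold fapp
  rw [Matrix.trace_mul_cycle, Uh_mul_U, one_mul, Matrix.trace_diagonal]

lemma fapp_isHermitian (f : ℝ → ℝ) : (fapp hM f).IsHermitian := by
  unfold fapp
  unfold Matrix.IsHermitian
  rw [Matrix.conjTranspose_mul, Matrix.conjTranspose_mul, Matrix.conjTranspose_conjTranspose,
    Matrix.diagonal_conjTranspose, mul_assoc]
  congr 1
  ext i
  simp

lemma fapp_posSemidef {f : ℝ → ℝ} (hf : ∀ x, 0 ≤ f x) : (fapp hM f).PosSemidef := by
  unfold fapp
  refine (Matrix.PosSemidef.diagonal ?_).mul_mul_conjTranspose_same _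
  intro i
  simpa using hf (hM.eigenvalues i)

lemma fapp_one : fapp hM (fun _ => 1) = 1 := by
  unfold fapp
  simp [U_mul_Uh]

lemma fapp_sub (f g : ℝ → ℝ) :
    fapp hM f - fapp hM g = fapp hM (fun x => f x - g x) := by
  unfold fapp
  rw [← Matrix.sub_mul, ← Matrix.mul_sub, Matrix.diagonal_sub]
  push_cast
  ring_nf

lemma fapp_add (f g : ℝ → ℝ) :
    fapp hM f + fapp hM g = fapp hM (fun x => f x + g x) := by
  unfold fapp
  rw [← Matrix.add_mul, ← Matrix.mul_add, Matrix.diagonal_add]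
  push_cast
  ring_nf

/-! ### Basic positivity facts -/

lemma psd_diag_nonneg {A : Matrix n n ℂ} (hA : A.PosSemidef) (i : n) : 0 ≤ A i i := by
  have := hA.dotProduct_mulVec_nonneg (Pi.single i 1)
  simpa [Matrix.mulVec_single, dotProduct, Pi.single_apply, apply_ite] using this

lemma trace_re_nonneg_of_psd {A : Matrix n n ℂ} (hA : A.PosSemidef) : 0 ≤ A.trace.re := by
  rw [Matrix.trace, Complex.re_sum]
  exact Finset.sum_nonneg fun i _ => (Complex.le_def.mp (psd_diag_nonneg hA i)).1

/-! ### Trace norm of Hermitian matrices -/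

lemma traceNorm_eq_cfc (A : Matrix n n ℂ) :
    traceNorm A = (cfc Real.sqrt (Aᴴ * A)).trace.re := by
  rw [(Matrix.posSemidef_conjTranspose_mul_self A).1.cfc_eq]
  rfl

open scoped MatrixOrder in
lemma traceNorm_eq_of_sq {A S : Matrix n n ℂ} (hS : S.PosSemidef) (hsq : S ^ 2 = Aᴴ * A) :
    traceNorm A = S.trace.re := by
  rw [traceNorm_eq_cfc, ← cfcₙ_eq_cfc (hf0 := Real.sqrt_zero), ← CFC.sqrt_eq_real_sqrt (Aᴴ * A)
    (Matrix.posSemidef_conjTranspose_mul_self A).nonneg,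
    CFC.sqrt_unique (by rw [← hsq, pow_two]) hS.nonneg]

lemma traceNorm_hermitian : traceNorm M = ∑ i, |hM.eigenvalues i| := by
  have habs : (fapp hM (fun x => |x|)).PosSemidef := fapp_posSemidef hM (fun x => abs_nonneg x)
  have hsq : fapp hM (fun x => |x|) ^ 2 = Mᴴ * M := by
    have hfun : (fun x : ℝ => |x| * |x|) = fun x : ℝ => x * x :=
      funext fun x => abs_mul_abs_self x
    rw [pow_two, hM.eq]
    conv_rhs => rw [← fapp_id hM]
    simp only [fapp_mul, hfun]
  rw [traceNorm_eq_of_sq habs hsq, trace_fapp]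
  rw [Complex.re_sum]
  simp

lemma trace_mul_fapp_re (C : Matrix n n ℂ) (f : ℝ → ℝ) :
    ((C * fapp hM f).trace).re =
      ∑ i, (((hM.eigenvectorUnitary : Matrix n n ℂ)ᴴ * C *
        (hM.eigenvectorUnitary : Matrix n n ℂ)) i i).re * f (hM.eigenvalues i) := by
  unfold fapp
  rw [← mul_assoc, ← mul_assoc, Matrix.trace_mul_cycle, ← mul_assoc]
  rw [Matrix.trace]
  rw [Complex.re_sum]
  congr 1
  funext i
  rw [Matrix.diag_apply, Matrix.mul_diagonal]
  simp [Complex.mul_re]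

/-- Duality upper bound for the trace norm of a Hermitian matrix. -/
lemma trace_mul_le_traceNorm (hM : M.IsHermitian) (C : Matrix n n ℂ)
    (hC1 : (1 - C).PosSemidef) (hC2 : (1 + C).PosSemidef) :
    ((C * M).trace).re ≤ traceNorm M := by
  set U : Matrix n n ℂ := (hM.eigenvectorUnitary : Matrix n n ℂ) with hU
  conv_lhs => rw [← fapp_id hM]
  rw [trace_mul_fapp_re, traceNorm_hermitian hM]
  apply Finset.sum_le_sum
  intro i _
  set c : ℂ := (Uᴴ * C * U) i i with hc
  have h1 : 0 ≤ (Uᴴ * (1 - C) * U) i i := psd_diag_nonneg (hC1.conjTranspose_mul_mul_same U) i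
  have h2 : 0 ≤ (Uᴴ * (1 + C) * U) i i := psd_diag_nonneg (hC2.conjTranspose_mul_mul_same U) i
  have e1 : Uᴴ * (1 - C) * U = 1 - Uᴴ * C * U := by
    rw [Matrix.mul_sub, Matrix.sub_mul, mul_one, Uh_mul_U]
  have e2 : Uᴴ * (1 + C) * U = 1 + Uᴴ * C * U := by
    rw [Matrix.mul_add, Matrix.add_mul, mul_one, Uh_mul_U]
  rw [e1] at h1
  rw [e2] at h2
  have h1' : c.re ≤ 1 := by
    have := (Complex.le_def.mp h1).1
    simpa [Matrix.one_apply, hc] using this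
  have h2' : -1 ≤ c.re := by
    have := (Complex.le_def.mp h2).1
    simp only [Complex.zero_re, Matrix.add_apply, Matrix.one_apply_eq, Complex.add_re,
      Complex.one_re] at this
    linarith
  calc c.re * hM.eigenvalues i ≤ |c.re * hM.eigenvalues i| := le_abs_self _
    _ = |c.re| * |hM.eigenvalues i| := abs_mul _ _
    _ ≤ 1 * |hM.eigenvalues i| := by
        apply mul_le_mul_of_nonneg_right _ (abs_nonneg _)
        rw [abs_le]; exact ⟨h2', h1'⟩
    _ = |hM.eigenvalues i| := one_mul _

/-- The sign matrix attaining the trace norm. -/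
lemma exists_dual (hM : M.IsHermitian) : ∃ C : Matrix n n ℂ, C.IsHermitian ∧
    (1 - C).PosSemidef ∧ (1 + C).PosSemidef ∧ ((C * M).trace).re = traceNorm M := by
  refine ⟨fapp hM (fun x => if 0 < x then 1 else -1), fapp_isHermitian hM _, ?_, ?_, ?_⟩
  · rw [← fapp_one hM, fapp_sub]
    refine fapp_posSemidef hM fun x => ?_
    split <;> norm_num
  · rw [← fapp_one hM, fapp_add]
    refine fapp_posSemidef hM fun x => ?_
    split <;> norm_num
  · have hfun : (fun x : ℝ => (if 0 < x then (1:ℝ) else -1) * x) = fun x => |x| := by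
      funext x
      by_cases hx : 0 < x
      · simp [hx, abs_of_pos hx]
      · simp [hx, abs_of_nonpos (not_lt.mp hx)]
    have h1 : fapp hM (fun x => if 0 < x then (1:ℝ) else -1) * M
        = fapp hM (fun x => |x|) := by
      calc fapp hM (fun x => if 0 < x then (1:ℝ) else -1) * M
          = fapp hM (fun x => if 0 < x then (1:ℝ) else -1) * fapp hM (fun x => x) := by
            rw [fapp_id]
        _ = fapp hM (fun x => |x|) := by simp only [fapp_mul, hfun]
    rw [h1, trace_fapp, traceNorm_hermitian hM]
    rw [Complex.re_sum]
    simp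

/-! ### Kraus channels and the trace norm -/

lemma psd_sum {ι : Type*} (s : Finset ι) (f : ι → Matrix n n ℂ)
    (h : ∀ a ∈ s, (f a).PosSemidef) : (∑ a ∈ s, f a).PosSemidef := by
  classical
  induction s using Finset.induction_on with
  | empty => simpa using Matrix.PosSemidef.zero
  | insert x s hx ih =>
    rw [Finset.sum_insert hx]
    exact ((h _ (Finset.mem_insert_self _ _)).add
      (ih fun a ha => h a (Finset.mem_insert_of_mem ha)))

variable {ι : Type*} [Fintype ι]

lemma applyKraus_psd (K : ι → Matrix n n ℂ) {ρ : Matrix n n ℂ} (hρ : ρ.PosSemidef) :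
    (applyKraus K ρ).PosSemidef :=
  psd_sum _ _ fun a _ => hρ.mul_mul_conjTranspose_same (K a)

lemma applyKraus_isHermitian (K : ι → Matrix n n ℂ) {ρ : Matrix n n ℂ} (hρ : ρ.IsHermitian) :
    (applyKraus K ρ).IsHermitian := by
  unfold applyKraus Matrix.IsHermitian
  rw [Matrix.conjTranspose_sum]
  congr 1
  funext a
  rw [Matrix.conjTranspose_mul, Matrix.conjTranspose_mul, Matrix.conjTranspose_conjTranspose,
    hρ.eq, mul_assoc]

lemma trace_applyKraus (K : ι → Matrix n n ℂ) (hK : ∑ a, (K a)ᴴ * K a = 1)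
    (ρ : Matrix n n ℂ) : (applyKraus K ρ).trace = ρ.trace := by
  unfold applyKraus
  rw [Matrix.trace_sum]
  have : ∀ a, (K a * ρ * (K a)ᴴ).trace = ((K a)ᴴ * K a * ρ).trace := by
    intro a
    rw [Matrix.trace_mul_cycle]
  simp_rw [this, ← Matrix.trace_sum, ← Finset.sum_mul, hK, one_mul]

lemma applyKraus_sub (K : ι → Matrix n n ℂ) (A B : Matrix n n ℂ) :
    applyKraus K (A - B) = applyKraus K A - applyKraus K B := by
  unfold applyKraus
  rw [← Finset.sum_sub_distrib]
  congr 1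
  funext a
  rw [Matrix.mul_sub, Matrix.sub_mul]

/-- Data processing / monotonicity of trace norm under a Kraus channel. -/
lemma traceNorm_applyKraus_le (K : ι → Matrix n n ℂ) (hK : ∑ a, (K a)ᴴ * K a = 1)
    {X : Matrix n n ℂ} (hX : X.IsHermitian) :
    traceNorm (applyKraus K X) ≤ traceNorm X := by
  obtain ⟨C, hC, hC1, hC2, hCt⟩ := exists_dual (applyKraus_isHermitian K hX)
  rw [← hCt]
  have key : (C * applyKraus K X).trace = ((∑ a, (K a)ᴴ * C * K a) * X).trace := by
    unfold applyKraus
    rw [Matrix.mul_sum, Matrix.trace_sum, Finset.sum_mul, Matrix.trace_sum]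
    congr 1
    funext a
    rw [show C * (K a * X * (K a)ᴴ) = C * (K a * X) * (K a)ᴴ by rw [← mul_assoc],
      Matrix.trace_mul_cycle, ← mul_assoc]
  rw [key]
  set C' : Matrix n n ℂ := ∑ a, (K a)ᴴ * C * K a with hC'
  have h1 : (1 - C').PosSemidef := by
    have : (1 : Matrix n n ℂ) - C' = ∑ a, (K a)ᴴ * (1 - C) * K a := by
      simp_rw [Matrix.mul_sub, Matrix.sub_mul, Matrix.mul_one, Finset.sum_sub_distrib, hC', hK]
    rw [this]
    exact psd_sum _ _ fun a _ => hC1.conjTranspose_mul_mul_same (K a)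
  have h2 : (1 + C').PosSemidef := by
    have : (1 : Matrix n n ℂ) + C' = ∑ a, (K a)ᴴ * (1 + C) * K a := by
      simp_rw [Matrix.mul_add, Matrix.add_mul, Matrix.mul_one, Finset.sum_add_distrib, hC', hK]
    rw [this]
    exact psd_sum _ _ fun a _ => hC2.conjTranspose_mul_mul_same (K a)
  exact trace_mul_le_traceNorm hX C' h1 h2

/-- Triangle inequality for the trace norm of Hermitian matrices. -/
lemma traceNorm_add_le {A B : Matrix n n ℂ} (hA : A.IsHermitian) (hB : B.IsHermitian) :
    traceNorm (A + B) ≤ traceNorm A + traceNorm B := by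
  obtain ⟨C, hC, hC1, hC2, hCt⟩ := exists_dual (hA.add hB)
  rw [← hCt, Matrix.mul_add, Matrix.trace_add, Complex.add_re]
  exact add_le_add (trace_mul_le_traceNorm hA C hC1 hC2) (trace_mul_le_traceNorm hB C hC1 hC2)

lemma traceNorm_neg (A : Matrix n n ℂ) : traceNorm (-A) = traceNorm A := by
  rw [traceNorm_eq_cfc, traceNorm_eq_cfc, show (-A)ᴴ * (-A) = Aᴴ * A by simp]

/-! ### Further trace facts -/

open scoped MatrixOrder in
lemma trace_mul_re_nonneg {A B : Matrix n n ℂ} (hA : A.PosSemidef) (hB : B.PosSemidef) :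
    0 ≤ ((A * B).trace).re := by
  have h1 : (CFC.sqrt A * B * CFC.sqrt A).trace = (A * B).trace := by
    rw [Matrix.trace_mul_cycle, CFC.sqrt_mul_sqrt_self A hA.nonneg]
  have h2 : (CFC.sqrt A * B * CFC.sqrt A).PosSemidef := by
    have := hB.mul_mul_conjTranspose_same (CFC.sqrt A)
    rwa [(CFC.sqrt_nonneg A).posSemidef.1.eq] at this
  rw [← h1]
  exact trace_re_nonneg_of_psd h2

lemma traceNorm_sub_of_orth {A B : Matrix n n ℂ} (hA : A.PosSemidef) (hB : B.PosSemidef)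
    (hAB : A * B = 0) : traceNorm (A - B) = (A.trace).re + (B.trace).re := by
  have hBA : B * A = 0 := by
    have := congrArg Matrix.conjTranspose hAB
    rwa [Matrix.conjTranspose_mul, hA.1.eq, hB.1.eq, Matrix.conjTranspose_zero] at this
  have hADD : (A + B).PosSemidef := hA.add hB
  have hsq : (A + B) ^ 2 = (A - B)ᴴ * (A - B) := by
    rw [(hA.1.sub hB.1).eq, pow_two]
    have e1 : (A + B) * (A + B) = A * A + B * B := by
      rw [Matrix.mul_add, Matrix.add_mul, Matrix.add_mul, hAB, hBA]
      abel
    have e2 : (A - B) * (A - B) = A * A + B * B := by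
      rw [Matrix.mul_sub, Matrix.sub_mul, Matrix.sub_mul, hAB, hBA]
      abel
    rw [e1, e2]
  rw [traceNorm_eq_of_sq hADD hsq, Matrix.trace_add, Complex.add_re]

/-! ### Positive part projection -/

lemma posProj_eq_fapp : posProj hM = fapp hM (fun x => if 0 < x then 1 else 0) := by
  unfold posProj fapp
  have hfun : (fun i => if 0 < hM.eigenvalues i then (1:ℂ) else 0)
      = fun i => (((if 0 < hM.eigenvalues i then (1:ℝ) else 0) : ℝ) : ℂ) := by
    funext i
    split <;> simp
  rw [hfun]

lemma posProj_psd : (posProj hM).PosSemidef := by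
  rw [posProj_eq_fapp]
  exact fapp_posSemidef hM fun x => by split <;> norm_num

/-- Holevo–Helstrom identity: the trace against the positive-part projector equals
half the trace norm, for a traceless Hermitian matrix. -/
lemma trace_posProj_mul (htr : M.trace = 0) :
    ((posProj hM * M).trace).re = traceNorm M / 2 := by
  have hPM : posProj hM * M = fapp hM (fun x => if 0 < x then x else 0) := by
    have hfun : (fun x : ℝ => (if 0 < x then (1:ℝ) else 0) * x)
        = fun x : ℝ => if 0 < x then x else 0 := by
      funext x
      split <;> simp
    calc posProj hM * M
        = fapp hM (fun x => if 0 < x then 1 else 0) * fapp hM (fun x => x) := by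
          rw [fapp_id, posProj_eq_fapp]
      _ = _ := by simp only [fapp_mul, hfun]
  have hsum : ∑ i, hM.eigenvalues i = 0 := by
    have h0 : (∑ i, (hM.eigenvalues i : ℂ)) = 0 := by
      rw [← trace_fapp hM (fun x => x), fapp_id]
      exact htr
    have := congrArg Complex.re h0
    rw [Complex.re_sum] at this
    simpa using this
  have hkey : ∀ x : ℝ, (if 0 < x then x else 0) = (|x| + x) / 2 := by
    intro x
    by_cases hx : 0 < x
    · rw [if_pos hx, abs_of_pos hx]; ring
    · rw [if_neg hx, abs_of_nonpos (le_of_not_gt hx)]; ring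
  rw [hPM, trace_fapp, Complex.re_sum, traceNorm_hermitian hM]
  simp only [Complex.ofReal_re]
  simp_rw [hkey]
  rw [← Finset.sum_div, Finset.sum_add_distrib, hsum, add_zero]

/-! ### Rank-one matrices -/

lemma mul_vecMulVec (A : Matrix n n ℂ) (v w : n → ℂ) :
    A * Matrix.vecMulVec v w = Matrix.vecMulVec (A *ᵥ v) w := by
  ext i j
  simp only [Matrix.mul_apply, Matrix.vecMulVec_apply, Matrix.mulVec, dotProduct,
    Finset.sum_mul]
  exact Finset.sum_congr rfl fun k _ => by ring

lemma vecMulVec_mul (v w : n → ℂ) (B : Matrix n n ℂ) :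
    Matrix.vecMulVec v w * B = Matrix.vecMulVec v (w ᵥ* B) := by
  ext i j
  simp only [Matrix.mul_apply, Matrix.vecMulVec_apply, Matrix.vecMul, dotProduct,
    Finset.mul_sum]
  exact Finset.sum_congr rfl fun k _ => by ring

lemma trace_mul_vecMulVec (Q : Matrix n n ℂ) (v w : n → ℂ) :
    (Q * Matrix.vecMulVec v w).trace = w ⬝ᵥ (Q *ᵥ v) := by
  simp only [Matrix.trace, Matrix.diag_apply, Matrix.mul_apply, Matrix.vecMulVec_apply,
    dotProduct, Matrix.mulVec, Finset.mul_sum]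
  refine Finset.sum_congr rfl fun i _ => Finset.sum_congr rfl fun k _ => by ring

lemma vecMulVec_mul_vecMulVec (v w v' w' : n → ℂ) :
    Matrix.vecMulVec v w * Matrix.vecMulVec v' w' = (w ⬝ᵥ v') • Matrix.vecMulVec v w' := by
  ext i j
  simp only [Matrix.mul_apply, Matrix.vecMulVec_apply, Matrix.smul_apply, dotProduct,
    smul_eq_mul, Finset.sum_mul]
  refine Finset.sum_congr rfl fun k _ => by ring

lemma vecMulVec_mulVec (v w x : n → ℂ) :
    Matrix.vecMulVec v w *ᵥ x = (w ⬝ᵥ x) • v := by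
  ext i
  simp only [Matrix.mulVec, Matrix.vecMulVec_apply, dotProduct, Pi.smul_apply,
    smul_eq_mul, Finset.sum_mul]
  refine Finset.sum_congr rfl fun k _ => by ring

lemma psd_vecMulVec (v : n → ℂ) : (Matrix.vecMulVec v (star v)).PosSemidef := by
  refine Matrix.PosSemidef.of_dotProduct_mulVec_nonneg ?_ ?_
  · ext i j
    simp [Matrix.conjTranspose_apply, Matrix.vecMulVec_apply, mul_comm]
  · intro x
    rw [vecMulVec_mulVec]
    rw [dotProduct_smul]
    have h1 : star x ⬝ᵥ v = star (star v ⬝ᵥ x) := by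
      simp [dotProduct, mul_comm]
    rw [h1, smul_eq_mul]
    exact mul_star_self_nonneg _

lemma real_smul_psd {c : ℝ} (hc : 0 ≤ c) {A : Matrix n n ℂ} (hA : A.PosSemidef) :
    ((c : ℂ) • A).PosSemidef := by
  refine Matrix.PosSemidef.of_dotProduct_mulVec_nonneg ?_ ?_
  · unfold Matrix.IsHermitian
    rw [Matrix.conjTranspose_smul, hA.1.eq]
    congr 1
    simp
  · intro x
    rw [Matrix.smul_mulVec, dotProduct_smul, smul_eq_mul]
    refine mul_nonneg ?_ (hA.dotProduct_mulVec_nonneg x)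
    rw [Complex.zero_le_real]
    exact hc

end Ghost

namespace GhostKet

open Ghost

variable {d D : ℕ} {V : Matrix (Fin D) (Fin d) ℂ}

lemma star_single (i : Fin d) : star (Pi.single i (1:ℂ)) = (Pi.single i 1 : Fin d → ℂ) := by
  ext k
  simp [Pi.single_apply, apply_ite]

lemma ket_orth (hV : Vᴴ * V = 1) (i j : Fin d) :
    star (ket V i) ⬝ᵥ ket V j = if i = j then 1 else 0 := by
  unfold ket
  rw [Matrix.star_mulVec, Matrix.dotProduct_mulVec, Matrix.vecMul_vecMul, hV,
    Matrix.vecMul_one, star_single, single_dotProduct]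
  simp [Pi.single_apply, eq_comm]

lemma ket_norm (hV : Vᴴ * V = 1) (i : Fin d) : star (ket V i) ⬝ᵥ ket V i = 1 := by
  rw [ket_orth hV]; simp

lemma proj_mulVec_ket (hV : Vᴴ * V = 1) (j : Fin d) :
    (V * Vᴴ) *ᵥ ket V j = ket V j := by
  unfold ket
  rw [Matrix.mulVec_mulVec]
  rw [Matrix.mul_assoc, hV, Matrix.mul_one]

lemma star_ket_vecMul_proj (hV : Vᴴ * V = 1) (j : Fin d) :
    star (ket V j) ᵥ* (V * Vᴴ) = star (ket V j) := by
  have hherm : (V * Vᴴ)ᴴ = V * Vᴴ := by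
    rw [Matrix.conjTranspose_mul, Matrix.conjTranspose_conjTranspose]
  conv_lhs => rw [← hherm]
  rw [← Matrix.star_mulVec, proj_mulVec_ket hV]

lemma ketbra_psd (j : Fin d) : (ketbra V j).PosSemidef := psd_vecMulVec _

lemma trace_ketbra (hV : Vᴴ * V = 1) (j : Fin d) : (ketbra V j).trace = 1 := by
  have h : (ketbra V j).trace = star (ket V j) ⬝ᵥ ket V j := by
    simp [ketbra, Matrix.trace, Matrix.vecMulVec_apply, dotProduct, mul_comm]
  rw [h, ket_norm hV]

lemma ketbra_mul_ketbra (hV : Vᴴ * V = 1) {i j : Fin d} (hij : i ≠ j) :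
    ketbra V i * ketbra V j = 0 := by
  unfold ketbra
  rw [Ghost.vecMulVec_mul_vecMulVec, ket_orth hV, if_neg hij, zero_smul]

lemma support_ketbra (hV : Vᴴ * V = 1) (j : Fin d) :
    (V * Vᴴ) * ketbra V j * (V * Vᴴ) = ketbra V j := by
  unfold ketbra
  rw [Ghost.mul_vecMulVec, Ghost.vecMulVec_mul, proj_mulVec_ket hV, star_ket_vecMul_proj hV]

lemma dminus1_ne (hd : 2 ≤ d) : ((d : ℂ) - 1) ≠ 0 := by
  have : (2 : ℝ) ≤ (d : ℝ) := by exact_mod_cast hd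
  intro h
  have := congrArg Complex.re h
  simp at this

  linarith

lemma rhoPerp_psd (hd : 2 ≤ d) (i : Fin d) : (rhoPerp V i).PosSemidef := by
  unfold rhoPerp
  have hc : ((d : ℂ) - 1)⁻¹ = ((((d : ℝ) - 1)⁻¹ : ℝ) : ℂ) := by
    push_cast
    ring
  rw [hc]
  refine real_smul_psd ?_ (psd_sum _ _ fun j _ => ketbra_psd j)
  have : (2 : ℝ) ≤ (d : ℝ) := by exact_mod_cast hd
  have h1 : (0:ℝ) ≤ (d : ℝ) - 1 := by linarith
  positivity

lemma trace_rhoPerp (hd : 2 ≤ d) (hV : Vᴴ * V = 1) (i : Fin d) :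
    (rhoPerp V i).trace = 1 := by
  unfold rhoPerp
  rw [Matrix.trace_smul, Matrix.trace_sum]
  have h1 : ∀ j ∈ Finset.univ.erase i, (ketbra V j).trace = 1 := fun j _ => trace_ketbra hV j
  rw [Finset.sum_congr rfl h1, Finset.sum_const, Finset.card_erase_of_mem (Finset.mem_univ i),
    Finset.card_univ, Fintype.card_fin]
  have hcast : ((d - 1 : ℕ) : ℂ) = (d : ℂ) - 1 := by
    have : 1 ≤ d := le_trans (by norm_num) hd
    push_cast [this]
    ring
  rw [nsmul_eq_mul, hcast, smul_eq_mul, mul_one, inv_mul_cancel₀ (dminus1_ne hd)]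

lemma ketbra_mul_rhoPerp (hV : Vᴴ * V = 1) (i : Fin d) :
    ketbra V i * rhoPerp V i = 0 := by
  unfold rhoPerp
  rw [Matrix.mul_smul, Matrix.mul_sum]
  have h1 : ∀ j ∈ Finset.univ.erase i, ketbra V i * ketbra V j = 0 := by
    intro j hj
    exact ketbra_mul_ketbra hV (Finset.ne_of_mem_erase hj).symm
  rw [Finset.sum_congr rfl h1, Finset.sum_const, smul_zero, smul_zero]

lemma support_rhoPerp (hV : Vᴴ * V = 1) (i : Fin d) :
    (V * Vᴴ) * rhoPerp V i * (V * Vᴴ) = rhoPerp V i := by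
  unfold rhoPerp
  rw [Matrix.mul_smul, Matrix.smul_mul, Matrix.mul_sum, Matrix.sum_mul]
  congr 1
  exact Finset.sum_congr rfl fun j _ => support_ketbra hV j

end GhostKet

set_option maxHeartbeats 1000000 in
open Ghost GhostKet in
/-- **Ghost projector lemma, part 1.** -/
theorem ghost_projector_nearly_fixes
    (d D r r' : ℕ) (hd : 2 ≤ d)
    (V : Matrix (Fin D) (Fin d) ℂ) (hV : Vᴴ * V = 1)
    (E : Fin r → Matrix (Fin D) (Fin D) ℂ) (hE : ∑ a, (E a)ᴴ * E a = 1)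
    (R : Fin r' → Matrix (Fin D) (Fin D) ℂ) (hR : ∑ k, (R k)ᴴ * R k = 1)
    (εt : ℝ)
    (hrec : ∀ ρ : Matrix (Fin D) (Fin D) ℂ, IsDensity ρ →
      (V * Vᴴ) * ρ * (V * Vᴴ) = ρ →
      traceNorm (applyKraus R (applyKraus E ρ) - ρ) ≤ εt)
    (i : Fin d)
    (hM : (applyKraus E (ketbra V i - rhoPerp V i)).IsHermitian) :
    ∀ a : Fin r,
      (evecNorm (E a *ᵥ ket V i - posProj hM *ᵥ (E a *ᵥ ket V i))) ^ 2 ≤ εt := by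
  intro a
  classical
  -- notation
  set ρi := ketbra V i with hρidef
  set ρp := rhoPerp V i with hρpdef
  set P := posProj hM with hPdef
  -- density facts
  have hρi_psd : ρi.PosSemidef := ketbra_psd i
  have hρp_psd : ρp.PosSemidef := rhoPerp_psd hd i
  have htrρi : ρi.trace = 1 := trace_ketbra hV i
  have htrρp : ρp.trace = 1 := trace_rhoPerp hd hV i
  have hρi_dens : IsDensity ρi := ⟨hρi_psd, htrρi⟩
  have hρp_dens : IsDensity ρp := ⟨hρp_psd, htrρp⟩
  have h1 := hrec ρi hρi_dens (support_ketbra hV i)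
  have h2 := hrec ρp hρp_dens (support_rhoPerp hV i)
  -- hermiticity facts
  have hρih : ρi.IsHermitian := hρi_psd.1
  have hρph : ρp.IsHermitian := hρp_psd.1
  have hX1h : (applyKraus R (applyKraus E ρi) - ρi).IsHermitian :=
    (applyKraus_isHermitian R (applyKraus_isHermitian E hρih)).sub hρih
  have hX2h : (applyKraus R (applyKraus E ρp) - ρp).IsHermitian :=
    (applyKraus_isHermitian R (applyKraus_isHermitian E hρph)).sub hρph
  have hYh : (applyKraus R (applyKraus E (ρi - ρp))).IsHermitian :=
    applyKraus_isHermitian R (applyKraus_isHermitian E (hρih.sub hρph))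
  -- trace norm of the difference of the two orthogonal code states
  have horth : ρi * ρp = 0 := ketbra_mul_rhoPerp hV i
  have htn2 : traceNorm (ρi - ρp) = 2 := by
    rw [traceNorm_sub_of_orth hρi_psd hρp_psd horth, htrρi, htrρp]
    norm_num
  -- decomposition and triangle inequality
  have hdecomp : ρi - ρp = applyKraus R (applyKraus E (ρi - ρp))
      + (-(applyKraus R (applyKraus E ρi) - ρi))
      + (applyKraus R (applyKraus E ρp) - ρp) := by
    rw [applyKraus_sub E, applyKraus_sub R]
    abel
  have htri : traceNorm (ρi - ρp) ≤ traceNorm (applyKraus R (applyKraus E (ρi - ρp)))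
      + traceNorm (applyKraus R (applyKraus E ρi) - ρi)
      + traceNorm (applyKraus R (applyKraus E ρp) - ρp) := by
    have htriA := traceNorm_add_le (hYh.add hX1h.neg) hX2h
    have htriB := traceNorm_add_le hYh hX1h.neg
    have hneg := traceNorm_neg (applyKraus R (applyKraus E ρi) - ρi)
    conv_lhs => rw [hdecomp]
    linarith
  have hmono : traceNorm (applyKraus R (applyKraus E (ρi - ρp)))
      ≤ traceNorm (applyKraus E (ρi - ρp)) :=
    traceNorm_applyKraus_le R hR hM
  have htnM : 2 - 2 * εt ≤ traceNorm (applyKraus E (ρi - ρp)) := by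
    rw [htn2] at htri
    linarith
  -- Helstrom
  have htrM : (applyKraus E (ρi - ρp)).trace = 0 := by
    rw [trace_applyKraus E hE, Matrix.trace_sub, htrρi, htrρp]
    ring
  have hhel : ((P * applyKraus E (ρi - ρp)).trace).re
      = traceNorm (applyKraus E (ρi - ρp)) / 2 := trace_posProj_mul hM htrM
  have hPM : 1 - εt ≤ ((P * applyKraus E (ρi - ρp)).trace).re := by
    rw [hhel]
    linarith
  -- split off the perpendicular part
  have hsplit : (P * applyKraus E (ρi - ρp)).trace
      = (P * applyKraus E ρi).trace - (P * applyKraus E ρp).trace := by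
    rw [applyKraus_sub E, Matrix.mul_sub, Matrix.trace_sub]
  have hPpsd : P.PosSemidef := posProj_psd hM
  have h0p : 0 ≤ ((P * applyKraus E ρp).trace).re :=
    trace_mul_re_nonneg hPpsd (applyKraus_psd E hρp_psd)
  have hPEρi : 1 - εt ≤ ((P * applyKraus E ρi).trace).re := by
    have := congrArg Complex.re hsplit
    rw [Complex.sub_re] at this
    linarith
  -- the complementary projector
  set Q := (1 : Matrix (Fin D) (Fin D) ℂ) - P with hQdef
  have hQfapp : Q = fapp hM (fun x => 1 - (if 0 < x then 1 else 0)) := by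
    rw [hQdef, hPdef, posProj_eq_fapp, ← fapp_one hM, fapp_sub]
  have hQpsd : Q.PosSemidef := by
    rw [hQfapp]
    exact fapp_posSemidef hM fun x => by split <;> norm_num
  have hQherm : Q.IsHermitian := hQpsd.1
  have hQidem : Q * Q = Q := by
    have hfun : (fun x : ℝ => (1 - (if 0 < x then (1:ℝ) else 0))
        * (1 - (if 0 < x then (1:ℝ) else 0)))
        = fun x : ℝ => 1 - (if 0 < x then 1 else 0) := by
      funext x
      split <;> norm_num
    rw [hQfapp]
    simp only [fapp_mul]
    rw [hfun]
  -- sum over Kraus operators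
  have hsumQ : ∑ b, ((Q * (E b * ρi * (E b)ᴴ)).trace).re
      = ((Q * applyKraus E ρi).trace).re := by
    unfold applyKraus
    rw [Matrix.mul_sum, Matrix.trace_sum, Complex.re_sum]
  have htrE1 : (applyKraus E ρi).trace = 1 := by
    rw [trace_applyKraus E hE, htrρi]
  have hQsplit : ((Q * applyKraus E ρi).trace).re
      = 1 - ((P * applyKraus E ρi).trace).re := by
    rw [hQdef, Matrix.sub_mul, Matrix.one_mul, Matrix.trace_sub, Complex.sub_re, htrE1]
    simp
  have hbound : ∑ b, ((Q * (E b * ρi * (E b)ᴴ)).trace).re ≤ εt := by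
    rw [hsumQ, hQsplit]
    linarith
  have hterm_nonneg : ∀ b : Fin r, 0 ≤ ((Q * (E b * ρi * (E b)ᴴ)).trace).re := fun b =>
    trace_mul_re_nonneg hQpsd (hρi_psd.mul_mul_conjTranspose_same (E b))
  have hle : ((Q * (E a * ρi * (E a)ᴴ)).trace).re ≤ εt :=
    le_trans (Finset.single_le_sum (fun b _ => hterm_nonneg b) (Finset.mem_univ a)) hbound
  -- identify the term with the squared norm
  set v : Fin D → ℂ := E a *ᵥ ket V i with hvdef
  set w : Fin D → ℂ := E a *ᵥ ket V i - posProj hM *ᵥ (E a *ᵥ ket V i) with hwdef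
  have hw : w = Q *ᵥ v := by
    rw [hwdef, hQdef, Matrix.sub_mulVec, Matrix.one_mulVec, hvdef, hPdef]
  have hvec : E a * ρi * (E a)ᴴ = Matrix.vecMulVec v (star v) := by
    rw [hρidef]
    unfold ketbra
    rw [Ghost.mul_vecMulVec, Ghost.vecMulVec_mul, ← Matrix.star_mulVec]
  have hstarQ : star v ᵥ* Q = star (Q *ᵥ v) := by
    conv_lhs => rw [← hQherm.eq]
    rw [← Matrix.star_mulVec]
  have hterm : ((Q * (E a * ρi * (E a)ᴴ)).trace).re = ∑ j, Complex.normSq (w j) := by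
    rw [hvec, trace_mul_vecMulVec]
    have h3 : star v ⬝ᵥ (Q *ᵥ v) = star w ⬝ᵥ w := by
      conv_lhs => rw [← hQidem, ← Matrix.mulVec_mulVec]
      rw [Matrix.dotProduct_mulVec, hstarQ, ← hw]
    rw [h3]
    have h4 : star w ⬝ᵥ w = ((∑ j, Complex.normSq (w j) : ℝ) : ℂ) := by
      push_cast
      simp only [dotProduct, Pi.star_apply]
      exact Finset.sum_congr rfl fun j _ => by
        rw [Complex.normSq_eq_conj_mul_self]
        rfl
    rw [h4, Complex.ofReal_re]
  have hnorm : (evecNorm w) ^ 2 = ∑ j, Complex.normSq (w j) := by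
    unfold evecNorm
    rw [Real.sq_sqrt (Finset.sum_nonneg fun j _ => Complex.normSq_nonneg _)]
  rw [hnorm, ← hterm]
  exact hle
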